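/- Let X be a uniform space and E an entourage of X. Suppose x₀,…,x_{n-1},x is an E-chain and (x,y) ∈ E. Then the concatenated E-chain x, x_{n-1},…,x₁, x₀, x₁,…,x_{n-1}, x, y (the reverse of the given chain followed by the given chain extended by y) is E-homotopic with fixed endpoints to the two-point E-chain x, y. -/

import Mathlib

/-- A list `x₀, …, xₙ` of points of `X` is an `E`-chain if each consecutive pair of
points `(xᵢ, xᵢ₊₁)` lies in `E`. -/
def IsEChain {X : Type*} (E : Set (X × X)) (l : List X) : Prop :=
  l.Chain' fun a b => (a, b) ∈ E

/-- A single move of an `E`-homotopy: insert one point into an `E`-chain (equivalently,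
read backwards, delete one point), in such a way that the result is still an `E`-chain
and the endpoints (the first and the last point) are unchanged. -/
def EChainStep {X : Type*} (E : Set (X × X)) (l l' : List X) : Prop :=
  (∃ l₁ x l₂, l = l₁ ++ l₂ ∧ l' = l₁ ++ x :: l₂) ∧
    IsEChain E l ∧ IsEChain E l' ∧ l.head? = l'.head? ∧ l.getLast? = l'.getLast?

/-- Two `E`-chains are `E`-homotopic (with fixed endpoints) if one can be obtained from
the other by a finite sequence of single-point insertions/deletions preserving the
endpoints; i.e. `EHomotopic E` is the equivalence relation generated by `EChainStep E`. -/
def EHomotopic {X : Type*} (E : Set (X × X)) : List X → List X → Prop :=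
  Relation.EqvGen (EChainStep E)

lemma isEChain_reverse {X : Type*} {E : Set (X × X)}
    (hsymm : ∀ x y : X, (x, y) ∈ E → (y, x) ∈ E) {l : List X}
    (h : IsEChain E l) : IsEChain E l.reverse := by
  rw [IsEChain, List.Chain', List.isChain_reverse]
  exact h.imp fun a b hab => hsymm a b hab

lemma aux_main {X : Type*} {E : Set (X × X)} (hrefl : ∀ x : X, (x, x) ∈ E)
    (hsymm : ∀ x y : X, (x, y) ∈ E → (y, x) ∈ E) :
    ∀ (c : List X) (hc : c ≠ []) (_ : IsEChain E c) (y : X)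
      (_ : (c.getLast hc, y) ∈ E),
      EHomotopic E (c.reverse ++ c.tail ++ [y]) [c.getLast hc, y] := by
  intro c
  induction c with
  | nil => intro hc; exact absurd rfl hc
  | cons a c' ih =>
    intro hc hchain y hxy
    cases c' with
    | nil =>
      simp only [List.reverse_singleton, List.tail_cons, List.append_nil,
        List.getLast_singleton]
      exact Relation.EqvGen.refl _
    | cons b t =>
      set c' : List X := b :: t with hc'
      have hc'ne : c' ≠ [] := by simp [hc']
      have hab : (a, b) ∈ E := hchain.rel_head
      have hchain' : IsEChain E c' := hchain.tail
      have hrev : IsEChain E c'.reverse := isEChain_reverse hsymm hchain'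
      have hlast : (a :: c').getLast hc = c'.getLast hc'ne := by
        simp [List.getLast_cons hc'ne]
      have hxy' : (c'.getLast hc'ne, y) ∈ E := by rwa [hlast] at hxy
      have hrevlast : c'.reverse.getLast? = some b := by
        rw [List.getLast?_reverse]; simp [hc']
      have hCy : IsEChain E (c' ++ [y]) := by
        refine List.IsChain.append hchain' (List.isChain_singleton y) ?_
        intro p hp q hq
        simp only [List.head?_cons, Option.mem_def, Option.some.injEq] at hq
        rw [List.getLast?_eq_getLast hc'ne, Option.mem_def, Option.some.injEq] at hp
        subst hp; subst hq; exact hxy'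
      have hTy : IsEChain E (t ++ [y]) := by
        cases t with
        | nil => exact List.isChain_singleton y
        | cons u s =>
          refine List.IsChain.append hchain'.tail (List.isChain_singleton y) ?_
          intro p hp q hq
          simp only [List.head?_cons, Option.mem_def, Option.some.injEq] at hq
          have heq : (u :: s).getLast? = c'.getLast? := by
            rw [hc', List.getLast?_cons_cons]
          rw [heq, List.getLast?_eq_getLast hc'ne, Option.mem_def,
            Option.some.injEq] at hp
          subst hp; subst hq; exact hxy'
      have hL0 : IsEChain E (c'.reverse ++ a :: (c' ++ [y])) := by
        refine List.IsChain.append hrev ?_ ?_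
        · refine List.IsChain.cons hCy ?_
          intro q hq
          have : (c' ++ [y]).head? = some b := by simp [hc']
          rw [this, Option.mem_def, Option.some.injEq] at hq
          subst hq; exact hab
        · intro p hp q hq
          rw [hrevlast, Option.mem_def, Option.some.injEq] at hp
          simp only [List.head?_cons, Option.mem_def, Option.some.injEq] at hq
          subst hp; subst hq; exact hsymm a b hab
      have hL1 : IsEChain E (c'.reverse ++ (c' ++ [y])) := by
        refine List.IsChain.append hrev hCy ?_
        intro p hp q hq
        rw [hrevlast, Option.mem_def, Option.some.injEq] at hp
        have : (c' ++ [y]).head? = some b := by simp [hc']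
        rw [this, Option.mem_def, Option.some.injEq] at hq
        subst hp; subst hq; exact hrefl b
      have hL2 : IsEChain E (c'.reverse ++ (t ++ [y])) := by
        refine List.IsChain.append hrev hTy ?_
        intro p hp q hq
        rw [hrevlast, Option.mem_def, Option.some.injEq] at hp
        cases t with
        | nil =>
          simp only [List.nil_append, List.head?_cons, Option.mem_def,
            Option.some.injEq] at hq
          subst hp; subst hq; exact hxy'
        | cons u s =>
          simp only [List.cons_append, List.head?_cons, Option.mem_def,
            Option.some.injEq] at hq
          subst hp; subst hq
          exact hchain'.rel_head
      have step1 : EChainStep E (c'.reverse ++ (c' ++ [y]))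
          (c'.reverse ++ a :: (c' ++ [y])) := by
        refine ⟨⟨c'.reverse, a, c' ++ [y], rfl, rfl⟩, hL1, hL0, ?_, ?_⟩
        · have h1 : c'.reverse ≠ [] := by simp [hc']
          rw [List.head?_append_of_ne_nil _ h1, List.head?_append_of_ne_nil _ h1]
        · have h2 : (a :: (c' ++ [y])).getLast? = some y := by
            rw [show a :: (c' ++ [y]) = (a :: c') ++ [y] from rfl, List.getLast?_concat]
          simp [List.getLast?_append, h2]
      have step2 : EChainStep E (c'.reverse ++ (t ++ [y]))
          (c'.reverse ++ b :: (t ++ [y])) := by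
        refine ⟨⟨c'.reverse, b, t ++ [y], rfl, rfl⟩, hL2, hL1, ?_, ?_⟩
        · have h1 : c'.reverse ≠ [] := by simp [hc']
          rw [List.head?_append_of_ne_nil _ h1, List.head?_append_of_ne_nil _ h1]
        · have h2 : (b :: (t ++ [y])).getLast? = some y := by
            rw [show b :: (t ++ [y]) = (b :: t) ++ [y] from rfl, List.getLast?_concat]
          simp [List.getLast?_append, h2]
      have hIH : EHomotopic E (c'.reverse ++ (t ++ [y])) [c'.getLast hc'ne, y] := by
        have := ih hc'ne hchain' y hxy'
        simpa [List.append_assoc, hc'] using this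
      have h0 : (a :: c').reverse ++ (a :: c').tail ++ [y]
          = c'.reverse ++ a :: (c' ++ [y]) := by simp
      rw [h0, hlast]
      refine Relation.EqvGen.trans _ _ _
        (Relation.EqvGen.symm _ _ (Relation.EqvGen.rel _ _ step1)) ?_
      refine Relation.EqvGen.trans _ _ _
        (Relation.EqvGen.symm _ _ (Relation.EqvGen.rel _ _ step2)) hIH

/-- Let `c = x₀, …, x_{n-1}, x` be an `E`-chain and suppose `(x, y) ∈ E`.  Then the
concatenated chain `x, x_{n-1}, …, x₁, x₀, x₁, …, x_{n-1}, x, y` (the reverse of `c`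
followed by `c` without its first point, followed by `y`) is `E`-homotopic with fixed
endpoints to the two-point chain `x, y`. -/
theorem reverse_concat_extend_homotopic_short {X : Type*} [UniformSpace X]
    {E : Set (X × X)} (hE : E ∈ uniformity X)
    (hsymm : ∀ x y : X, (x, y) ∈ E → (y, x) ∈ E)
    (c : List X) (hc : c ≠ []) (hchain : IsEChain E c)
    (y : X) (hxy : (c.getLast hc, y) ∈ E) :
    EHomotopic E (c.reverse ++ c.tail ++ [y]) [c.getLast hc, y] := by
  exact aux_main (fun x => refl_mem_uniformity hE) hsymm c hc hchain y hxy
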